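/- Let $K$ be a field, $R = K[x_0, \dots, x_m]$ a standard graded polynomial ring, and let $I_1, I_2 \subseteq R$ be homogeneous ideals. Let $F_1, F_2 \in R$ be homogeneous forms of degrees $d_1, d_2$ forming a regular sequence on $R$, with $F_1 \in I_2$ and $F_2 \in I_1$. Set $I = F_1 I_1 + F_2 I_2$. Then for all $t$, $h_{R/I}(t) = h_{R/(F_1,F_2)}(t) + h_{R/I_1}(t - d_1) + h_{R/I_2}(t - d_2)$, where $h_M(t) = \dim_K M_t$ denotes the Hilbert function. -/

import Mathlib

open MvPolynomial

variable {K : Type*} [Field K] {m : ℕ}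

/-- The Hilbert function `t ↦ dim_K (R/I)_t` of a quotient of a standard graded
polynomial ring `R = K[x₀, …, x_m]` by an ideal `I`, extended by `0` for `t < 0`. -/
noncomputable def hilbFn (I : Ideal (MvPolynomial (Fin (m + 1)) K)) (t : ℤ) : ℕ :=
  if t < 0 then 0 else
    Module.finrank K
      (↥(homogeneousSubmodule (Fin (m + 1)) K t.toNat) ⧸
        Submodule.comap (homogeneousSubmodule (Fin (m + 1)) K t.toNat).subtype
          (Submodule.restrictScalars K I))

/-! ### Auxiliary definitions and lemmas -/

/-- The degree-`e` graded piece of `R = K[x₀,…,x_m]`, extended by `⊥` for `e < 0`. -/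
noncomputable def SZ (K : Type*) [Field K] (m : ℕ) (e : ℤ) :
    Submodule K (MvPolynomial (Fin (m + 1)) K) :=
  if 0 ≤ e then homogeneousSubmodule (Fin (m + 1)) K e.toNat else ⊥

/-- The degree-`e` graded piece of the ideal `I`. -/
noncomputable def NZ (I : Ideal (MvPolynomial (Fin (m + 1)) K)) (e : ℤ) :
    Submodule K (MvPolynomial (Fin (m + 1)) K) :=
  Submodule.restrictScalars K I ⊓ SZ K m e

instance homogeneousSubmodule_finiteDimensional (n : ℕ) :
    FiniteDimensional K (homogeneousSubmodule (Fin (m + 1)) K n) := by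
  classical
  set g : Fin (m + 1) →₀ ℕ := Finsupp.equivFunOnFinite.symm fun _ => n with hg
  have hfin : FiniteDimensional K
      (restrictSupport K ((Finset.Iic g : Finset (Fin (m + 1) →₀ ℕ)) : Set (Fin (m + 1) →₀ ℕ))) :=
    Module.Finite.of_basis (basisRestrictSupport K _)
  have hle : homogeneousSubmodule (Fin (m + 1)) K n ≤
      restrictSupport K ((Finset.Iic g : Finset (Fin (m + 1) →₀ ℕ)) : Set (Fin (m + 1) →₀ ℕ)) := by
    intro p hp
    rw [mem_homogeneousSubmodule] at hp
    rw [restrictSupport, AddMonoidAlgebra.mem_supported]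
    intro d hd
    have hcoeff : coeff d p ≠ 0 := by
      exact Finsupp.mem_support_iff.mp hd
    have hdeg : Finsupp.weight 1 d = n := hp hcoeff
    rw [show (1 : Fin (m + 1) → ℕ) = fun _ => 1 from rfl, ← Finsupp.degree_eq_weight_one] at hdeg
    simp only [Finset.coe_Iic, Set.mem_Iic]
    rw [Finsupp.le_def]
    intro i
    have : d i ≤ n := hdeg ▸ Finsupp.le_degree i d
    simpa [hg, Finsupp.equivFunOnFinite] using this
  exact Submodule.finiteDimensional_of_le hle

instance SZ_finiteDimensional (e : ℤ) : FiniteDimensional K (SZ K m e) := by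
  unfold SZ
  rcases le_or_gt 0 e with h | h
  · rw [if_pos h]; infer_instance
  · rw [if_neg (not_le.mpr h)]; infer_instance

instance NZ_finiteDimensional (I : Ideal (MvPolynomial (Fin (m + 1)) K)) (e : ℤ) :
    FiniteDimensional K (NZ I e) :=
  Submodule.finiteDimensional_of_le inf_le_right

lemma hc_mul {F g : MvPolynomial (Fin (m + 1)) K} {d : ℕ} (hF : F.IsHomogeneous d) (n : ℕ) :
    homogeneousComponent n (F * g) =
      if d ≤ n then F * homogeneousComponent (n - d) g else 0 := by
  conv_lhs => rw [← sum_homogeneousComponent g, Finset.mul_sum, map_sum]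
  have key : ∀ i, homogeneousComponent n (F * homogeneousComponent i g) =
      if n = d + i then F * homogeneousComponent i g else 0 := fun i =>
    homogeneousComponent_of_mem
      ((mem_homogeneousSubmodule _ _).mpr (hF.mul (homogeneousComponent_isHomogeneous i g)))
  simp only [key]
  by_cases h : d ≤ n
  · rw [if_pos h]
    by_cases hr : g.totalDegree < n - d
    · rw [homogeneousComponent_eq_zero _ _ hr, mul_zero]
      refine Finset.sum_eq_zero fun i hi => if_neg ?_
      simp only [Finset.mem_range] at hi; omega
    · push_neg at hr
      rw [Finset.sum_eq_single (n - d)]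
      · rw [if_pos (by omega)]
      · intro i _ hne
        exact if_neg (fun hc => hne (by omega))
      · intro hmem
        exact absurd (Finset.mem_range.mpr (by omega)) hmem
  · rw [if_neg h]
    exact Finset.sum_eq_zero fun i _ => if_neg (by omega)

lemma hilb_rel (I : Ideal (MvPolynomial (Fin (m + 1)) K)) (t : ℤ) :
    hilbFn I t + Module.finrank K (NZ I t) = Module.finrank K (SZ K m t) := by
  by_cases ht : t < 0
  · rw [hilbFn, if_pos ht, NZ, SZ, if_neg (by omega), inf_bot_eq, finrank_bot]
  · rw [hilbFn, if_neg ht, NZ, SZ, if_pos (by omega)]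
    set S := homogeneousSubmodule (Fin (m + 1)) K t.toNat
    set X := Submodule.restrictScalars K I
    have h1 : Module.finrank K ↥(X ⊓ S) = Module.finrank K ↥(Submodule.comap S.subtype X) := by
      rw [inf_comm X S, ← Submodule.map_comap_subtype]
      exact ((Submodule.equivMapOfInjective _ (Submodule.injective_subtype S) _).finrank_eq).symm
    rw [h1]
    exact Submodule.finrank_quotient_add_finrank _

lemma NZ_top (e : ℤ) : NZ (⊤ : Ideal (MvPolynomial (Fin (m + 1)) K)) e = SZ K m e := by
  rw [NZ]
  simp

lemma hilb_top (t : ℤ) : hilbFn (⊤ : Ideal (MvPolynomial (Fin (m + 1)) K)) t = 0 := by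
  have := hilb_rel (K := K) (m := m) ⊤ t
  rw [NZ_top] at this
  omega

lemma NZ_sum_mul (I₁ I₂ : Ideal (MvPolynomial (Fin (m + 1)) K))
    (hI₁hom : ∀ f ∈ I₁, ∀ n : ℕ, homogeneousComponent n f ∈ I₁)
    (hI₂hom : ∀ f ∈ I₂, ∀ n : ℕ, homogeneousComponent n f ∈ I₂)
    {F₁ F₂ : MvPolynomial (Fin (m + 1)) K} {d₁ d₂ : ℕ}
    (hF₁hom : F₁.IsHomogeneous d₁) (hF₂hom : F₂.IsHomogeneous d₂) (t : ℤ) :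
    NZ (Ideal.span {F₁} * I₁ + Ideal.span {F₂} * I₂) t =
      Submodule.map (LinearMap.mulLeft K F₁) (NZ I₁ (t - d₁)) ⊔
        Submodule.map (LinearMap.mulLeft K F₂) (NZ I₂ (t - d₂)) := by
  refine le_antisymm ?_ (sup_le ?_ ?_)
  · rintro f ⟨hfI, hfS⟩
    rcases lt_or_ge t 0 with ht | ht
    · have : f = 0 := by simpa [SZ, not_le.mpr ht] using hfS
      subst this; exact zero_mem _
    simp only [SZ, if_pos ht] at hfS
    have hfI' : f ∈ Ideal.span {F₁} * I₁ ⊔ Ideal.span {F₂} * I₂ := hfI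
    obtain ⟨g, hg, h, hh, hgh⟩ := Submodule.mem_sup.mp hfI' 
    obtain ⟨a, ha, rfl⟩ := Ideal.mem_span_singleton_mul.mp hg
    obtain ⟨b, hb, rfl⟩ := Ideal.mem_span_singleton_mul.mp hh
    have hf : f = homogeneousComponent t.toNat (F₁ * a) +
        homogeneousComponent t.toNat (F₂ * b) := by
      rw [← map_add, hgh]
      rw [homogeneousComponent_of_mem hfS, if_pos rfl]
    rw [hf, hc_mul hF₁hom, hc_mul hF₂hom]
    apply add_mem
    · split_ifs with h'
      · refine Submodule.mem_sup_left (Submodule.mem_map_of_mem ⟨hI₁hom a ha _, ?_⟩)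
        simp only [SZ, if_pos (show (0:ℤ) ≤ t - d₁ by omega)]
        rw [show (t - (d₁:ℤ)).toNat = t.toNat - d₁ by omega]
        exact (mem_homogeneousSubmodule _ _).mpr (homogeneousComponent_isHomogeneous _ _)
      · exact zero_mem _
    · split_ifs with h'
      · refine Submodule.mem_sup_right (Submodule.mem_map_of_mem ⟨hI₂hom b hb _, ?_⟩)
        simp only [SZ, if_pos (show (0:ℤ) ≤ t - d₂ by omega)]
        rw [show (t - (d₂:ℤ)).toNat = t.toNat - d₂ by omega]
        exact (mem_homogeneousSubmodule _ _).mpr (homogeneousComponent_isHomogeneous _ _)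
      · exact zero_mem _
  · rintro _ ⟨x, ⟨hxI, hxS⟩, rfl⟩
    rcases lt_or_ge (t - (d₁:ℤ)) 0 with h | h
    · have : x = 0 := by simp only [SZ, if_neg (not_le.mpr h)] at hxS; simpa using hxS
      subst this
      simpa using zero_mem _
    simp only [SZ, if_pos h] at hxS
    refine ⟨?_, ?_⟩
    · show F₁ * x ∈ Ideal.span {F₁} * I₁ ⊔ Ideal.span {F₂} * I₂
      exact Submodule.mem_sup_left (Ideal.mem_span_singleton_mul.mpr ⟨x, hxI, rfl⟩)
    · simp only [SZ, if_pos (show (0:ℤ) ≤ t by omega)]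
      have := hF₁hom.mul ((mem_homogeneousSubmodule _ _).mp hxS)
      rw [show d₁ + (t - (d₁:ℤ)).toNat = t.toNat by omega] at this
      exact (mem_homogeneousSubmodule _ _).mpr this
  · rintro _ ⟨x, ⟨hxI, hxS⟩, rfl⟩
    rcases lt_or_ge (t - (d₂:ℤ)) 0 with h | h
    · have : x = 0 := by simp only [SZ, if_neg (not_le.mpr h)] at hxS; simpa using hxS
      subst this
      simpa using zero_mem _
    simp only [SZ, if_pos h] at hxS
    refine ⟨?_, ?_⟩
    · show F₂ * x ∈ Ideal.span {F₁} * I₁ ⊔ Ideal.span {F₂} * I₂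
      exact Submodule.mem_sup_right (Ideal.mem_span_singleton_mul.mpr ⟨x, hxI, rfl⟩)
    · simp only [SZ, if_pos (show (0:ℤ) ≤ t by omega)]
      have := hF₂hom.mul ((mem_homogeneousSubmodule _ _).mp hxS)
      rw [show d₂ + (t - (d₂:ℤ)).toNat = t.toNat by omega] at this
      exact (mem_homogeneousSubmodule _ _).mpr this

lemma NZ_inf (I₁ I₂ : Ideal (MvPolynomial (Fin (m + 1)) K))
    {F₁ F₂ : MvPolynomial (Fin (m + 1)) K} {d₁ d₂ : ℕ}
    (hF₁hom : F₁.IsHomogeneous d₁) (hF₂hom : F₂.IsHomogeneous d₂)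
    (hreg₂ : ∀ g, F₂ * g ∈ Ideal.span {F₁} → g ∈ Ideal.span {F₁})
    (h1 : F₁ ∈ I₂) (h2 : F₂ ∈ I₁) (t : ℤ) :
    Submodule.map (LinearMap.mulLeft K F₁) (NZ I₁ (t - d₁)) ⊓
        Submodule.map (LinearMap.mulLeft K F₂) (NZ I₂ (t - d₂)) =
      Submodule.map (LinearMap.mulLeft K (F₁ * F₂)) (SZ K m (t - d₁ - d₂)) := by
  refine le_antisymm ?_ ?_
  · rintro f ⟨hfA, hfB⟩
    obtain ⟨x, ⟨hxI, hxS⟩, hfx⟩ := hfA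
    obtain ⟨y, ⟨hyI, hyS⟩, hfy⟩ := hfB
    simp only [LinearMap.mulLeft_apply] at hfx hfy
    rcases lt_or_ge (t - (d₁:ℤ)) 0 with h | h
    · have : x = 0 := by simp only [SZ, if_neg (not_le.mpr h)] at hxS; simpa using hxS
      rw [← hfx, this, mul_zero]; exact zero_mem _
    rcases lt_or_ge (t - (d₂:ℤ)) 0 with h' | h'
    · have : y = 0 := by simp only [SZ, if_neg (not_le.mpr h')] at hyS; simpa using hyS
      rw [← hfy, this, mul_zero]; exact zero_mem _
    simp only [SZ, if_pos h] at hxS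
    simp only [SZ, if_pos h'] at hyS
    have hyspan : y ∈ Ideal.span {F₁} := by
      refine hreg₂ y ?_
      rw [hfy, ← hfx]
      exact Ideal.mem_span_singleton.mpr (dvd_mul_right _ _)
    obtain ⟨c, rfl⟩ := Ideal.mem_span_singleton.mp hyspan
    have hy' : F₁ * c = homogeneousComponent (t - (d₂:ℤ)).toNat (F₁ * c) := by
      rw [homogeneousComponent_of_mem hyS, if_pos rfl]
    rw [hc_mul hF₁hom] at hy'
    by_cases hd : d₁ ≤ (t - (d₂:ℤ)).toNat
    · rw [if_pos hd] at hy'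
      set c' := homogeneousComponent ((t - (d₂:ℤ)).toNat - d₁) c with hc'
      refine ⟨c', ?_, ?_⟩
      · simp only [SZ, if_pos (show (0:ℤ) ≤ t - d₁ - d₂ by omega)]
        rw [show (t - (d₁:ℤ) - d₂).toNat = (t - (d₂:ℤ)).toNat - d₁ by omega]
        exact (mem_homogeneousSubmodule _ _).mpr (homogeneousComponent_isHomogeneous _ _)
      · simp only [LinearMap.mulLeft_apply]
        rw [← hfy, hy']
        ring
    · rw [if_neg hd] at hy'
      rw [← hfy, hy', mul_zero]
      exact zero_mem _
  · rintro _ ⟨c, hcS, rfl⟩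
    rcases lt_or_ge (t - (d₁:ℤ) - d₂) 0 with h | h
    · have : c = 0 := by simp only [SZ, if_neg (not_le.mpr h)] at hcS; simpa using hcS
      subst this
      simpa using zero_mem _
    simp only [SZ, if_pos h] at hcS
    have hchom := (mem_homogeneousSubmodule _ _).mp hcS
    constructor
    · refine ⟨F₂ * c, ⟨Ideal.mul_mem_right c I₁ h2, ?_⟩, ?_⟩
      · simp only [SZ, if_pos (show (0:ℤ) ≤ t - d₁ by omega)]
        have := hF₂hom.mul hchom
        rw [show d₂ + (t - (d₁:ℤ) - d₂).toNat = (t - (d₁:ℤ)).toNat by omega] at this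
        exact (mem_homogeneousSubmodule _ _).mpr this
      · simp only [LinearMap.mulLeft_apply]; ring
    · refine ⟨F₁ * c, ⟨Ideal.mul_mem_right c I₂ h1, ?_⟩, ?_⟩
      · simp only [SZ, if_pos (show (0:ℤ) ≤ t - d₂ by omega)]
        have := hF₁hom.mul hchom
        rw [show d₁ + (t - (d₁:ℤ) - d₂).toNat = (t - (d₂:ℤ)).toNat by omega] at this
        exact (mem_homogeneousSubmodule _ _).mpr this
      · simp only [LinearMap.mulLeft_apply]; ring

lemma key_count (I₁ I₂ : Ideal (MvPolynomial (Fin (m + 1)) K))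
    (hI₁hom : ∀ f ∈ I₁, ∀ n : ℕ, homogeneousComponent n f ∈ I₁)
    (hI₂hom : ∀ f ∈ I₂, ∀ n : ℕ, homogeneousComponent n f ∈ I₂)
    {F₁ F₂ : MvPolynomial (Fin (m + 1)) K} {d₁ d₂ : ℕ}
    (hF₁hom : F₁.IsHomogeneous d₁) (hF₂hom : F₂.IsHomogeneous d₂)
    (hF₁0 : F₁ ≠ 0) (hF₂0 : F₂ ≠ 0)
    (hreg₂ : ∀ g, F₂ * g ∈ Ideal.span {F₁} → g ∈ Ideal.span {F₁})
    (h1 : F₁ ∈ I₂) (h2 : F₂ ∈ I₁) (t : ℤ) :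
    Module.finrank K (NZ (Ideal.span {F₁} * I₁ + Ideal.span {F₂} * I₂) t) +
        Module.finrank K (SZ K m (t - d₁ - d₂)) =
      Module.finrank K (NZ I₁ (t - d₁)) + Module.finrank K (NZ I₂ (t - d₂)) := by
  have inj1 : Function.Injective (LinearMap.mulLeft K F₁) := fun u v h =>
    mul_left_cancel₀ hF₁0 h
  have inj2 : Function.Injective (LinearMap.mulLeft K F₂) := fun u v h =>
    mul_left_cancel₀ hF₂0 h
  have inj12 : Function.Injective (LinearMap.mulLeft K (F₁ * F₂)) := fun u v h =>
    mul_left_cancel₀ (mul_ne_zero hF₁0 hF₂0) h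
  have h12 : Module.finrank K (SZ K m (t - d₁ - d₂)) =
      Module.finrank K (Submodule.map (LinearMap.mulLeft K (F₁ * F₂)) (SZ K m (t - d₁ - d₂))) :=
    (Submodule.equivMapOfInjective _ inj12 _).finrank_eq
  have hA : Module.finrank K (NZ I₁ (t - d₁)) =
      Module.finrank K (Submodule.map (LinearMap.mulLeft K F₁) (NZ I₁ (t - d₁))) :=
    (Submodule.equivMapOfInjective _ inj1 _).finrank_eq
  have hB : Module.finrank K (NZ I₂ (t - d₂)) =
      Module.finrank K (Submodule.map (LinearMap.mulLeft K F₂) (NZ I₂ (t - d₂))) :=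
    (Submodule.equivMapOfInjective _ inj2 _).finrank_eq
  rw [NZ_sum_mul I₁ I₂ hI₁hom hI₂hom hF₁hom hF₂hom t, h12,
    ← NZ_inf I₁ I₂ hF₁hom hF₂hom hreg₂ h1 h2 t, hA, hB]
  exact Submodule.finrank_sup_add_finrank_inf_eq _ _

/-- The Hilbert function formula for liaison addition (Schwartau, Geramita–Migliore):
`h_{R/(F₁I₁+F₂I₂)}(t) = h_{R/(F₁,F₂)}(t) + h_{R/I₁}(t-d₁) + h_{R/I₂}(t-d₂)`. -/
theorem hilbFn_liaison_addition
    (I₁ I₂ : Ideal (MvPolynomial (Fin (m + 1)) K))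
    (hI₁hom : ∀ f ∈ I₁, ∀ n : ℕ, homogeneousComponent n f ∈ I₁)
    (hI₂hom : ∀ f ∈ I₂, ∀ n : ℕ, homogeneousComponent n f ∈ I₂)
    {F₁ F₂ : MvPolynomial (Fin (m + 1)) K} {d₁ d₂ : ℕ}
    (hF₁hom : F₁.IsHomogeneous d₁) (hF₂hom : F₂.IsHomogeneous d₂)
    (hreg₁ : ∀ g, F₁ * g = 0 → g = 0)
    (hreg₂ : ∀ g, F₂ * g ∈ Ideal.span {F₁} → g ∈ Ideal.span {F₁})
    (h1 : F₁ ∈ I₂) (h2 : F₂ ∈ I₁) (t : ℤ) :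
    hilbFn (Ideal.span {F₁} * I₁ + Ideal.span {F₂} * I₂) t
      = hilbFn (Ideal.span {F₁, F₂}) t + hilbFn I₁ (t - d₁) + hilbFn I₂ (t - d₂) := by
  have hF₁0 : F₁ ≠ 0 := by
    intro h
    exact one_ne_zero (hreg₁ 1 (by simp [h]))
  by_cases hF₂0 : F₂ = 0
  · -- degenerate case: `F₂ = 0` forces `(F₁) = ⊤`, hence `I₂ = ⊤` and `d₁ = 0`.
    subst hF₂0
    have hspan1 : Ideal.span {F₁} = ⊤ := by
      rw [Ideal.eq_top_iff_one]
      exact hreg₂ 1 (by simp)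
    obtain ⟨u, hu⟩ : F₁ ∣ 1 :=
      Ideal.mem_span_singleton.mp (hspan1 ▸ Submodule.mem_top)
    have hd₁ : d₁ = 0 := by
      by_contra hd
      have h0 : homogeneousComponent 0 (F₁ * u) = if d₁ ≤ 0 then F₁ * homogeneousComponent (0 - d₁) u else 0 :=
        hc_mul hF₁hom 0
      rw [if_neg (by omega), ← hu] at h0
      have h1' : homogeneousComponent 0 (1 : MvPolynomial (Fin (m + 1)) K) = 1 := by
        rw [homogeneousComponent_of_mem ((mem_homogeneousSubmodule _ _).mpr (isHomogeneous_one _ _)),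
          if_pos rfl]
      rw [h1'] at h0
      exact one_ne_zero h0
    have hI₂top : I₂ = ⊤ := by
      rw [Ideal.eq_top_iff_one, hu]
      exact Ideal.mul_mem_right u I₂ h1
    have hJ : Ideal.span {F₁} * I₁ + Ideal.span {(0 : MvPolynomial (Fin (m + 1)) K)} * I₂ = I₁ := by
      rw [hspan1, Ideal.top_mul]
      have : Ideal.span {(0 : MvPolynomial (Fin (m + 1)) K)} = ⊥ := by
        simp [Ideal.span_singleton_eq_bot]
      rw [this, Ideal.bot_mul, Submodule.add_eq_sup, sup_bot_eq]
    have hspan12 : Ideal.span {F₁, (0 : MvPolynomial (Fin (m + 1)) K)} = ⊤ := by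
      rw [Ideal.eq_top_iff_one, hu]
      exact Ideal.mul_mem_right u _ (Ideal.subset_span (by simp))
    rw [hJ, hspan12, hilb_top, hI₂top, hilb_top, hd₁]
    simp
  · -- main case
    have e₁ := key_count I₁ I₂ hI₁hom hI₂hom hF₁hom hF₂hom hF₁0 hF₂0 hreg₂ h1 h2 t
    have e₂ := key_count (K := K) (m := m) ⊤ ⊤ (fun _ _ _ => Submodule.mem_top)
      (fun _ _ _ => Submodule.mem_top) hF₁hom hF₂hom hF₁0 hF₂0 hreg₂
      Submodule.mem_top Submodule.mem_top t
    have hspan : Ideal.span {F₁} * (⊤ : Ideal (MvPolynomial (Fin (m + 1)) K)) +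
        Ideal.span {F₂} * ⊤ = Ideal.span {F₁, F₂} := by
      rw [Ideal.mul_top, Ideal.mul_top, Submodule.add_eq_sup,
        show ({F₁, F₂} : Set (MvPolynomial (Fin (m + 1)) K)) = insert F₁ {F₂} from rfl,
        Ideal.span_insert]
    rw [hspan, NZ_top, NZ_top] at e₂
    have q0 := hilb_rel (Ideal.span {F₁} * I₁ + Ideal.span {F₂} * I₂) t
    have q1 := hilb_rel (Ideal.span {F₁, F₂}) t
    have q2 := hilb_rel I₁ (t - d₁)
    have q3 := hilb_rel I₂ (t - d₂)
    omega
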